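/- Let X, Y be finite-dimensional real inner product spaces, F : X → ℝ convex and ν-smooth (ν > 0), L : X → Y linear, γ, τ > 0 with γτ‖L‖² < 1. Let K = (γ/τ)I - γ² L*L on X and Q(x,y) = (Kx, y) on Z = X × Y. Define the operator Q⁻¹C : Z → Z by (x,y) ↦ (K⁻¹∇F(x), 0). Then Q⁻¹C is ξ-cocoercive with respect to the inner product ⟨·,·⟩_Q induced by Q, with ξ = (γ/τ - γ²‖L‖²)/ν; that is, for all z = (x,y), z' = (x',y') in Z: ξ‖Q⁻¹C(z) - Q⁻¹C(z')‖²_Q ≤ ⟨Q⁻¹C(z) - Q⁻¹C(z'), z - z'⟩_Q. -/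

import Mathlib

open scoped InnerProductSpace

open Set Filter Topology

section Aux

variable {X : Type*} [NormedAddCommGroup X] [InnerProductSpace ℝ X] [CompleteSpace X]

lemma aux_line_hasDerivAt (F : X → ℝ) (gradF : X → X)
    (hgrad : ∀ x, HasGradientAt F (gradF x) x) (x v : X) (t : ℝ) :
    HasDerivAt (fun s : ℝ => F (x + s • v)) ⟪gradF (x + t • v), v⟫_ℝ t := by
  have hc : HasDerivAt (fun s : ℝ => x + s • v) v t := by
    simpa using ((hasDerivAt_id t).smul_const v).const_add x
  have := (hgrad (x + t • v)).hasFDerivAt.comp_hasDerivAt t hc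
  simpa [InnerProductSpace.toDual_apply_apply, Function.comp_def] using this

lemma aux_first_order (F : X → ℝ) (hF : ConvexOn ℝ Set.univ F) (gradF : X → X)
    (hgrad : ∀ x, HasGradientAt F (gradF x) x) (x z : X) :
    F x + ⟪gradF x, z - x⟫_ℝ ≤ F z := by
  set v := z - x with hv
  have hd : HasDerivAt (fun s : ℝ => F (x + s • v)) ⟪gradF x, v⟫_ℝ 0 := by
    have := aux_line_hasDerivAt F gradF hgrad x v 0
    simpa using this
  have hslope : Tendsto (slope (fun s : ℝ => F (x + s • v)) 0) (𝓝[>] 0)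
      (𝓝 ⟪gradF x, v⟫_ℝ) :=
    (hasDerivAt_iff_tendsto_slope.1 hd).mono_left
      (nhdsWithin_mono 0 (fun t ht => ne_of_gt ht))
  have hkey : ⟪gradF x, v⟫_ℝ ≤ F z - F x := by
    refine le_of_tendsto hslope ?_
    filter_upwards [Ioc_mem_nhdsGT_of_mem (by constructor <;> norm_num : (0:ℝ) ∈ Ico 0 1)]
      with t ht
    have hconv := hF.2 (mem_univ x) (mem_univ z) (by linarith [ht.2] : (0:ℝ) ≤ 1 - t)
      ht.1.le (by ring)
    have heq : (1 - t) • x + t • z = x + t • v := by rw [hv]; module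
    rw [heq] at hconv
    rw [slope_def_field]
    simp only [zero_smul, add_zero, sub_zero, smul_eq_mul] at *
    rw [div_le_iff₀ ht.1]
    nlinarith [hconv]
  linarith

lemma aux_descent (F : X → ℝ) (gradF : X → X)
    (hgrad : ∀ x, HasGradientAt F (gradF x) x) (ν : ℝ) (hν : 0 < ν)
    (hsmooth : ∀ x x' : X, ‖gradF x - gradF x'‖ ≤ ν * ‖x - x'‖) (x v : X) :
    F (x + v) ≤ F x + ⟪gradF x, v⟫_ℝ + ν / 2 * ‖v‖ ^ 2 := by
  set h : ℝ → ℝ := fun t => F (x + t • v) - t * ⟪gradF x, v⟫_ℝ - ν / 2 * t ^ 2 * ‖v‖ ^ 2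
    with hh
  have hderiv : ∀ t : ℝ,
      HasDerivAt h (⟪gradF (x + t • v) - gradF x, v⟫_ℝ - ν * t * ‖v‖ ^ 2) t := by
    intro t
    have h1 := aux_line_hasDerivAt F gradF hgrad x v t
    have h2 : HasDerivAt (fun t : ℝ => t * ⟪gradF x, v⟫_ℝ) ⟪gradF x, v⟫_ℝ t := by
      simpa using (hasDerivAt_id t).mul_const ⟪gradF x, v⟫_ℝ
    have h3 : HasDerivAt (fun t : ℝ => ν / 2 * t ^ 2 * ‖v‖ ^ 2) (ν * t * ‖v‖ ^ 2) t := by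
      have : HasDerivAt (fun t : ℝ => t ^ 2) (2 * t) t := by
        simpa using hasDerivAt_pow 2 t
      have := (this.const_mul (ν / 2)).mul_const (‖v‖ ^ 2)
      exact this.congr_deriv (by ring)
    have := (h1.sub h2).sub h3
    refine this.congr_deriv ?_
    rw [inner_sub_left]; try ring
  have hmono : AntitoneOn h (Icc 0 1) := by
    apply antitoneOn_of_deriv_nonpos (convex_Icc 0 1)
    · exact fun t _ => ((hderiv t).continuousAt).continuousWithinAt
    · intro t _
      exact (hderiv t).differentiableAt.differentiableWithinAt
    · intro t ht
      rw [interior_Icc] at ht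
      rw [(hderiv t).deriv]
      have hb1 : ⟪gradF (x + t • v) - gradF x, v⟫_ℝ ≤ ‖gradF (x + t • v) - gradF x‖ * ‖v‖ :=
        real_inner_le_norm _ _
      have hb2 : ‖gradF (x + t • v) - gradF x‖ ≤ ν * (t * ‖v‖) := by
        have := hsmooth (x + t • v) x
        simpa [norm_smul, abs_of_pos ht.1] using this
      nlinarith [norm_nonneg v, ht.1.le]
  have h10 : h 1 ≤ h 0 := hmono (by constructor <;> norm_num) (by constructor <;> norm_num)
    zero_le_one
  simp only [hh, one_smul, zero_smul, add_zero, one_pow, one_mul, zero_mul, zero_pow,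
    mul_zero, sub_zero] at h10
  linarith

lemma aux_cocoercive (F : X → ℝ) (hF : ConvexOn ℝ Set.univ F) (gradF : X → X)
    (hgrad : ∀ x, HasGradientAt F (gradF x) x) (ν : ℝ) (hν : 0 < ν)
    (hsmooth : ∀ x x' : X, ‖gradF x - gradF x'‖ ≤ ν * ‖x - x'‖) (x x' : X) :
    ‖gradF x - gradF x'‖ ^ 2 ≤ ν * ⟪gradF x - gradF x', x - x'⟫_ℝ := by
  have claim : ∀ a b : X, F a - ⟪gradF a, a⟫_ℝ ≤
      F b - ⟪gradF a, b⟫_ℝ - 1 / (2 * ν) * ‖gradF b - gradF a‖ ^ 2 := by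
    intro a b
    set w := gradF b - gradF a with hw
    have hdesc := aux_descent F gradF hgrad ν hν hsmooth b (-(1 / ν) • w)
    have hfo := aux_first_order F hF gradF hgrad a (b + -(1 / ν) • w)
    have e1 : ⟪gradF b, -(1 / ν) • w⟫_ℝ = ⟪gradF a, -(1/ν) • w⟫_ℝ - (1 / ν) * ‖w‖ ^ 2 := by
      have hgb : gradF b = gradF a + w := by rw [hw]; abel
      rw [hgb]
      simp only [inner_add_left, real_inner_smul_right, real_inner_self_eq_norm_sq]
      ring
    have e2 : ‖(-(1 / ν) • w)‖ ^ 2 = (1 / ν) ^ 2 * ‖w‖ ^ 2 := by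
      rw [norm_smul]
      simp [abs_of_pos hν, mul_pow]
    have e3 : ⟪gradF a, b + -(1 / ν) • w - a⟫_ℝ =
        ⟪gradF a, b⟫_ℝ + ⟪gradF a, -(1/ν) • w⟫_ℝ - ⟪gradF a, a⟫_ℝ := by
      rw [inner_sub_right, inner_add_right]
    rw [e3] at hfo
    rw [e1, e2] at hdesc
    have hν2 : ν / 2 * ((1 / ν) ^ 2 * ‖w‖ ^ 2) = 1 / (2 * ν) * ‖w‖ ^ 2 := by
      field_simp
    have h3 : 1 / ν * ‖w‖ ^ 2 = 1 / (2 * ν) * ‖w‖ ^ 2 + 1 / (2 * ν) * ‖w‖ ^ 2 := by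
      field_simp; ring
    linarith [hfo, hdesc]
  have h1 := claim x x'
  have h2 := claim x' x
  have hrev : ‖gradF x' - gradF x‖ = ‖gradF x - gradF x'‖ := norm_sub_rev _ _
  rw [hrev] at h1
  have hx : ⟪gradF x - gradF x', x - x'⟫_ℝ =
      ⟪gradF x, x⟫_ℝ - ⟪gradF x, x'⟫_ℝ - ⟪gradF x', x⟫_ℝ + ⟪gradF x', x'⟫_ℝ := by
    rw [inner_sub_left, inner_sub_right, inner_sub_right]; ring
  have hνne : (0:ℝ) < 2 * ν := by linarith
  rw [hx]
  have := add_le_add h1 h2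
  have key : 1 / (2 * ν) * ‖gradF x - gradF x'‖ ^ 2 + 1 / (2 * ν) * ‖gradF x - gradF x'‖ ^ 2 ≤
      ⟪gradF x, x⟫_ℝ - ⟪gradF x, x'⟫_ℝ - ⟪gradF x', x⟫_ℝ + ⟪gradF x', x'⟫_ℝ := by linarith
  have : (1 / ν) * ‖gradF x - gradF x'‖ ^ 2 ≤
      ⟪gradF x, x⟫_ℝ - ⟪gradF x, x'⟫_ℝ - ⟪gradF x', x⟫_ℝ + ⟪gradF x', x'⟫_ℝ := by
    have e : (1 / ν) * ‖gradF x - gradF x'‖ ^ 2 =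
        1 / (2 * ν) * ‖gradF x - gradF x'‖ ^ 2 + 1 / (2 * ν) * ‖gradF x - gradF x'‖ ^ 2 := by
      field_simp; ring
    linarith [key, e.le, e.ge]
  calc ‖gradF x - gradF x'‖ ^ 2 = ν * ((1/ν) * ‖gradF x - gradF x'‖ ^ 2) := by
        field_simp
    _ ≤ ν * (⟪gradF x, x⟫_ℝ - ⟪gradF x, x'⟫_ℝ - ⟪gradF x', x⟫_ℝ + ⟪gradF x', x'⟫_ℝ) := by
        exact mul_le_mul_of_nonneg_left this hν.le

end Aux

/-- Cocoercivity parameter of `Q⁻¹C` in the `Q`-metric for the Condat--Vũ algorithm. -/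
theorem Qinv_C_cocoercive
    {X Y : Type*} [NormedAddCommGroup X] [InnerProductSpace ℝ X] [FiniteDimensional ℝ X]
    [NormedAddCommGroup Y] [InnerProductSpace ℝ Y] [FiniteDimensional ℝ Y]
    (L : X →L[ℝ] Y) (γ τ ν : ℝ) (hγ : 0 < γ) (hτ : 0 < τ) (hν : 0 < ν)
    (hQ : γ * τ * ‖L‖ ^ 2 < 1)
    (F : X → ℝ) (hF : ConvexOn ℝ Set.univ F)
    (gradF : X → X) (hgrad : ∀ x, HasGradientAt F (gradF x) x)
    (hsmooth : ∀ x x' : X, ‖gradF x - gradF x'‖ ≤ ν * ‖x - x'‖)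
    (K : X →L[ℝ] X)
    (hK : ∀ v : X, K v = (γ / τ) • v - (γ ^ 2) • ContinuousLinearMap.adjoint L (L v))
    (Kinv : X →L[ℝ] X) (hKinv : ∀ v : X, K (Kinv v) = v ∧ Kinv (K v) = v) :
    ∀ (x x' : X) (y y' : Y),
      ((γ / τ - γ ^ 2 * ‖L‖ ^ 2) / ν)
          * (⟪K (Kinv (gradF x) - Kinv (gradF x')), Kinv (gradF x) - Kinv (gradF x')⟫_ℝ
              + ⟪(0 : Y), (0 : Y)⟫_ℝ)
        ≤ ⟪K (Kinv (gradF x) - Kinv (gradF x')), x - x'⟫_ℝ + ⟪(0 : Y), y - y'⟫_ℝ := by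
  intro x x' y y'
  set u := gradF x - gradF x' with hu
  set v := Kinv (gradF x) - Kinv (gradF x') with hvv
  have hKvu : K v = u := by
    rw [hvv, map_sub, (hKinv (gradF x)).1, (hKinv (gradF x')).1]
  have hlampos : 0 < γ / τ - γ ^ 2 * ‖L‖ ^ 2 := by
    have h1 : γ ^ 2 * ‖L‖ ^ 2 < γ / τ := by
      have := mul_lt_mul_of_pos_left hQ (mul_pos hγ (inv_pos.2 hτ))
      calc γ ^ 2 * ‖L‖ ^ 2 = γ * τ⁻¹ * (γ * τ * ‖L‖ ^ 2) := by field_simp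
        _ < γ * τ⁻¹ * 1 := this
        _ = γ / τ := by rw [mul_one, div_eq_mul_inv]
    linarith
  set lam := γ / τ - γ ^ 2 * ‖L‖ ^ 2 with hlam
  -- quadratic form lower bound
  have hquad : lam * ‖v‖ ^ 2 ≤ ⟪u, v⟫_ℝ := by
    rw [← hKvu, hK v, inner_sub_left, real_inner_smul_left, real_inner_smul_left,
      ContinuousLinearMap.adjoint_inner_left, real_inner_self_eq_norm_sq,
      real_inner_self_eq_norm_sq]
    have hLv : ‖L v‖ ^ 2 ≤ ‖L‖ ^ 2 * ‖v‖ ^ 2 := by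
      have := L.le_opNorm v
      nlinarith [norm_nonneg (L v), norm_nonneg L, norm_nonneg v]
    rw [hlam]
    nlinarith [sq_nonneg γ]
  have hCS : ⟪u, v⟫_ℝ ≤ ‖u‖ * ‖v‖ := real_inner_le_norm _ _
  have hcoco : ‖u‖ ^ 2 ≤ ν * ⟪u, x - x'⟫_ℝ := by
    rw [hu]
    exact aux_cocoercive F hF gradF hgrad ν hν hsmooth x x'
  have hKvv : ⟪K v, v⟫_ℝ = ⟪u, v⟫_ℝ := by rw [hKvu]
  have hKvx : ⟪K v, x - x'⟫_ℝ = ⟪u, x - x'⟫_ℝ := by rw [hKvu]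
  have hz1 : ⟪(0 : Y), (0 : Y)⟫_ℝ = 0 := inner_zero_left _
  have hz2 : ⟪(0 : Y), y - y'⟫_ℝ = 0 := inner_zero_left _
  rw [hz1, hz2, add_zero, add_zero, hKvv, hKvx, div_mul_eq_mul_div, div_le_iff₀ hν]
  have hlb : lam * (lam * ‖v‖ ^ 2) ≤ lam * ⟪u, v⟫_ℝ :=
    mul_le_mul_of_nonneg_left hquad hlampos.le
  have hub : lam * ⟪u, v⟫_ℝ ≤ lam * (‖u‖ * ‖v‖) :=
    mul_le_mul_of_nonneg_left hCS hlampos.le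
  have key : lam * ⟪u, v⟫_ℝ ≤ ‖u‖ ^ 2 := by
    nlinarith [sq_nonneg (‖u‖ - lam * ‖v‖), hlb, hub]
  nlinarith [key, hcoco]
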